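/- arXiv:2504.05159 — 3 statements merged into one kernel-verified Lean document; each statement's English description precedes it below -/
import Mathlib

section
/- Let p be an odd prime, s ≥ 1, N = (p^s − 1)/2, and let C be the cosine matrix of size N+1. Then the Gram matrix of the rows of C satisfies: (C·Cᵀ)_{u,u} = 2N for every u with 1 ≤ u ≤ N; (C·Cᵀ)_{N+1,N+1} = N+1; (C·Cᵀ)_{u,v} = −1 for all u ≠ v with 1 ≤ u, v ≤ N; and (C·Cᵀ)_{u,N+1} = (C·Cᵀ)_{N+1,u} = 0 for every u with 1 ≤ u ≤ N. -/
open Matrix Finset Real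


lemma sum_cos_ne (n : ℕ) (hn : 0 < n) (a : ℤ) (ha : ¬ (n:ℤ) ∣ a) :
    ∑ j ∈ Finset.range n, Real.cos (2 * Real.pi * a * j / n) = 0 := by
  have hn0 : (n:ℝ) ≠ 0 := Nat.cast_ne_zero.mpr hn.ne'
  set θ : ℝ := 2 * Real.pi * a / n with hθ
  set z : ℂ := Complex.exp (θ * Complex.I) with hz
  have hzj : ∀ j : ℕ, z ^ j = Complex.exp ((θ * j : ℝ) * Complex.I) := by
    intro j
    rw [hz, ← Complex.exp_nat_mul]
    congr 1
    push_cast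
    ring
  have hzn : z ^ n = 1 := by
    rw [hzj]
    have : (θ * n : ℝ) = a * (2 * Real.pi) := by
      rw [hθ]; field_simp
    rw [this]
    push_cast
    rw [show ((a:ℂ) * (2 * Real.pi) * Complex.I) = (a:ℂ) * (2 * Real.pi * Complex.I) by ring]
    exact Complex.exp_int_mul_two_pi_mul_I a
  have hz1 : z ≠ 1 := by
    intro h
    rw [hz, Complex.exp_eq_one_iff] at h
    obtain ⟨k, hk⟩ := h
    have h2 : (θ:ℂ) * Complex.I = ((k * (2*Real.pi) : ℝ):ℂ) * Complex.I := by
      rw [hk]; push_cast; ring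
    have hk' := mul_right_cancel₀ Complex.I_ne_zero h2
    have : θ = k * (2 * Real.pi) := by exact_mod_cast hk'
    rw [hθ] at this
    apply ha
    refine ⟨k, ?_⟩
    have hπ : (2 * Real.pi) ≠ 0 := by positivity
    have h3 : (2*Real.pi) * (a:ℝ) = (2*Real.pi) * ((n:ℝ)*k) := by
      field_simp at this; rw [this]
    have : (a : ℝ) = n * k := mul_left_cancel₀ hπ h3
    exact_mod_cast this
  have hsum : ∑ j ∈ Finset.range n, z ^ j = 0 := by
    rw [geom_sum_eq hz1, hzn]
    simp
  calc ∑ j ∈ Finset.range n, Real.cos (2 * Real.pi * a * j / n)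
      = ∑ j ∈ Finset.range n, (z ^ j).re := by
        refine Finset.sum_congr rfl fun j _ => ?_
        rw [hzj, Complex.exp_ofReal_mul_I_re, hθ]
        congr 1
        ring
    _ = (∑ j ∈ Finset.range n, z ^ j).re := by rw [Complex.re_sum]
    _ = 0 := by rw [hsum]; rfl

lemma T_eq (N : ℕ) (a : ℤ) :
    (1 : ℝ) + ∑ j ∈ Finset.range N,
        2 * Real.cos (2 * Real.pi * a * (j + 1) / ((2 * N + 1 : ℕ) : ℝ)) =
      if ((2 * N + 1 : ℕ) : ℤ) ∣ a then ((2 * N + 1 : ℕ) : ℝ) else 0 := by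
  set n : ℕ := 2 * N + 1 with hn
  have hnpos : 0 < n := by omega
  have hn0 : (n : ℝ) ≠ 0 := Nat.cast_ne_zero.mpr hnpos.ne'
  set f : ℕ → ℝ := fun m => Real.cos (2 * Real.pi * a * m / n) with hf
  by_cases hd : (n : ℤ) ∣ a
  · obtain ⟨k, hk⟩ := hd
    rw [if_pos ⟨k, hk⟩]
    have hterm : ∀ j ∈ Finset.range N,
        2 * Real.cos (2 * Real.pi * a * (j + 1) / (n : ℝ)) = 2 := by
      intro j _
      have harg : 2 * Real.pi * a * (j + 1) / (n : ℝ) = ((k * (j+1) : ℤ) : ℝ) * (2 * Real.pi) := by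
        rw [hk]; push_cast; field_simp
      rw [harg, Real.cos_int_mul_two_pi]; norm_num
    rw [Finset.sum_congr rfl hterm, Finset.sum_const]
    simp [hn]
    ring
  · rw [if_neg hd]
    have h0 : ∑ j ∈ Finset.range n, f j = 0 := sum_cos_ne n hnpos a hd
    have hsplit : ∑ j ∈ Finset.range n, f j =
        ∑ j ∈ Finset.range (N+1), f j + ∑ j ∈ Finset.Ico (N+1) n, f j := by
      rw [Finset.sum_range_add_sum_Ico _ (by omega : N + 1 ≤ n)]
    have h1 : ∑ j ∈ Finset.range (N+1), f j = f 0 + ∑ j ∈ Finset.range N, f (j+1) := by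
      rw [Finset.sum_range_succ']; ring
    have h2 : ∑ j ∈ Finset.Ico (N+1) n, f j = ∑ j ∈ Finset.range N, f (N+1+j) := by
      rw [Finset.sum_Ico_eq_sum_range]
      have : n - (N+1) = N := by omega
      rw [this]
    have h3 : ∑ j ∈ Finset.range N, f (N+1+j) = ∑ j ∈ Finset.range N, f (j+1) := by
      rw [← Finset.sum_range_reflect (fun j => f (j+1)) N]
      refine Finset.sum_congr rfl fun j hj => ?_
      rw [Finset.mem_range] at hj
      have he : N - 1 - j + 1 = N - j := by omega
      rw [he]
      have hc : ((N+1+j : ℕ) : ℝ) = (n : ℝ) - ((N - j : ℕ) : ℝ) := by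
        have : ((N - j : ℕ) : ℝ) = (N : ℝ) - j := by
          rw [Nat.cast_sub (by omega)]
        rw [this]; push_cast [hn]; ring
      show Real.cos _ = Real.cos _
      rw [hc]
      have harg : 2 * Real.pi * a * ((n:ℝ) - ((N-j : ℕ):ℝ)) / (n:ℝ)
          = (a : ℝ) * (2 * Real.pi) - 2 * Real.pi * a * ((N-j : ℕ):ℝ) / (n:ℝ) := by
        field_simp
      rw [harg, Real.cos_int_mul_two_pi_sub]
    have hf0 : f 0 = 1 := by simp [hf]
    have hfin : ∑ j ∈ Finset.range N,
        2 * Real.cos (2 * Real.pi * a * (j + 1) / ((2 * N + 1 : ℕ) : ℝ))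
        = 2 * ∑ j ∈ Finset.range N, f (j+1) := by
      rw [Finset.mul_sum]
      refine Finset.sum_congr rfl fun j _ => ?_
      rw [hf]; push_cast [hn]; ring_nf
    rw [hfin]
    rw [hsplit, h1, h2, h3, hf0] at h0
    linarith

lemma sum_shift (N : ℕ) (g : ℕ → ℝ) :
    ∑ jn ∈ Finset.range (N + 1), (if jn = 0 then 1 else g jn) =
      1 + ∑ j ∈ Finset.range N, g (j + 1) := by
  rw [Finset.sum_range_succ']
  simp [add_comm]

/-- Gram matrix of the rows of the cosine matrix for `n = p^s`.
The cosine matrix `C` has rows indexed by `i = 1, …, N+1` (here `i : Fin (N+1)`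
represents row `i.val + 1`) and columns by `j = 0, …, N`; its entries are
`C_{i,0} = 1`, `C_{i,j} = 2·cos(2π·i·j/p^s)` for `1 ≤ i ≤ N`, `1 ≤ j ≤ N`, and the
last row (`i = N+1`) is all ones.  Then `C·Cᵀ` has diagonal entries `2N`
(resp. `N+1` in the last position) and off-diagonal entries `−1` (resp. `0` in
the last row/column). -/
theorem cosine_matrix_gram (p s N : ℕ) (hp : p.Prime) (hodd : Odd p) (hs : 1 ≤ s)
    (hN : N = (p ^ s - 1) / 2)
    (C : Matrix (Fin (N + 1)) (Fin (N + 1)) ℝ)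
    (hC : ∀ i j : Fin (N + 1), C i j =
      if i.val = N then 1
      else if j.val = 0 then 1
      else 2 * Real.cos (2 * Real.pi * (i.val + 1) * j.val / (p : ℝ) ^ s)) :
    (∀ u : Fin (N + 1), u.val < N → (C * Cᵀ) u u = 2 * N) ∧
    (∀ u : Fin (N + 1), u.val = N → (C * Cᵀ) u u = N + 1) ∧
    (∀ u v : Fin (N + 1), u.val < N → v.val < N → u ≠ v → (C * Cᵀ) u v = -1) ∧
    (∀ u v : Fin (N + 1), u.val < N → v.val = N →
      (C * Cᵀ) u v = 0 ∧ (C * Cᵀ) v u = 0) := by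
  have hn2 : p ^ s = 2 * N + 1 := by
    obtain ⟨k, hk⟩ := hodd.pow (n := s)
    have hp1 : 1 ≤ p ^ s := Nat.one_le_pow _ _ hp.pos
    omega
  have hps : ((p : ℝ)) ^ s = ((2 * N + 1 : ℕ) : ℝ) := by
    rw [← hn2]; push_cast; ring
  have hnd : ∀ z : ℤ, z ≠ 0 → z.natAbs ≤ 2 * N → ¬ ((2 * N + 1 : ℕ) : ℤ) ∣ z := by
    intro z hz hb hdvd
    have h1 : (2 * N + 1) ∣ z.natAbs := by
      have h := Int.natAbs_dvd_natAbs.mpr hdvd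
      rwa [Int.natAbs_natCast] at h
    have h2 : 0 < z.natAbs := Int.natAbs_pos.mpr hz
    have := Nat.le_of_dvd h2 h1
    omega
  have hrow : ∀ u v : Fin (N + 1), (C * Cᵀ) u v =
      ∑ jn ∈ Finset.range (N + 1),
        (if u.val = N then (1:ℝ) else if jn = 0 then 1
          else 2 * Real.cos (2 * Real.pi * (u.val + 1) * jn / ((2 * N + 1 : ℕ) : ℝ))) *
        (if v.val = N then (1:ℝ) else if jn = 0 then 1
          else 2 * Real.cos (2 * Real.pi * (v.val + 1) * jn / ((2 * N + 1 : ℕ) : ℝ))) := by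
    intro u v
    rw [Matrix.mul_apply, ← Fin.sum_univ_eq_sum_range]
    refine Finset.sum_congr rfl fun j _ => ?_
    rw [Matrix.transpose_apply, hC, hC, hps]
  have part2 : ∀ u : Fin (N + 1), u.val = N → (C * Cᵀ) u u = N + 1 := by
    intro u hu
    rw [hrow]
    simp [hu]
  -- row u (u < N) dotted with the all-ones row
  have hrsum : ∀ u : Fin (N + 1), u.val < N →
      ∑ jn ∈ Finset.range (N + 1),
        (if u.val = N then (1:ℝ) else if jn = 0 then 1
          else 2 * Real.cos (2 * Real.pi * (u.val + 1) * jn / ((2 * N + 1 : ℕ) : ℝ))) = 0 := by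
    intro u hu
    have hu' : u.val ≠ N := Nat.ne_of_lt hu
    have e0 : ∀ jn ∈ Finset.range (N + 1),
        (if u.val = N then (1:ℝ) else if jn = 0 then 1
          else 2 * Real.cos (2 * Real.pi * (u.val + 1) * jn / ((2 * N + 1 : ℕ) : ℝ)))
        = (if jn = 0 then 1
          else 2 * Real.cos (2 * Real.pi * (u.val + 1) * jn / ((2 * N + 1 : ℕ) : ℝ))) :=
      fun jn _ => by rw [if_neg hu']
    rw [Finset.sum_congr rfl e0, sum_shift]
    have e1 : ∀ j ∈ Finset.range N,
        2 * Real.cos (2 * Real.pi * ((u.val:ℝ) + 1) * ((j+1 : ℕ):ℝ) / ((2 * N + 1 : ℕ) : ℝ))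
        = 2 * Real.cos (2 * Real.pi * (((u.val:ℤ) + 1 : ℤ):ℝ) * ((j:ℝ) + 1) / ((2 * N + 1 : ℕ) : ℝ)) := by
      intro j _
      congr 2
      push_cast
      ring
    rw [Finset.sum_congr rfl e1]
    have hT := T_eq N ((u.val : ℤ) + 1)
    rw [if_neg (hnd _ (by omega) (by omega))] at hT
    exact hT
  have part4 : ∀ u v : Fin (N + 1), u.val < N → v.val = N →
      (C * Cᵀ) u v = 0 ∧ (C * Cᵀ) v u = 0 := by
    intro u v hu hv
    constructor
    · rw [hrow]
      refine (Finset.sum_congr rfl fun jn _ => ?_).trans (hrsum u hu)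
      rw [if_pos hv, mul_one]
    · rw [hrow]
      refine (Finset.sum_congr rfl fun jn _ => ?_).trans (hrsum u hu)
      rw [if_pos hv, one_mul]
  have hmain : ∀ u v : Fin (N + 1), u.val < N → v.val < N →
      (C * Cᵀ) u v =
        (if ((2 * N + 1 : ℕ) : ℤ) ∣ ((u.val : ℤ) + v.val + 2) then ((2 * N + 1 : ℕ) : ℝ) else 0)
        + (if ((2 * N + 1 : ℕ) : ℤ) ∣ ((u.val : ℤ) - v.val) then ((2 * N + 1 : ℕ) : ℝ) else 0)
        - 1 := by
    intro u v hu hv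
    have hu' : u.val ≠ N := Nat.ne_of_lt hu
    have hv' : v.val ≠ N := Nat.ne_of_lt hv
    rw [hrow]
    have e1 : ∀ jn ∈ Finset.range (N + 1),
        (if u.val = N then (1:ℝ) else if jn = 0 then 1
          else 2 * Real.cos (2 * Real.pi * (u.val + 1) * jn / ((2 * N + 1 : ℕ) : ℝ))) *
        (if v.val = N then (1:ℝ) else if jn = 0 then 1
          else 2 * Real.cos (2 * Real.pi * (v.val + 1) * jn / ((2 * N + 1 : ℕ) : ℝ)))
        = (if jn = 0 then 1
          else (2 * Real.cos (2 * Real.pi * (u.val + 1) * jn / ((2 * N + 1 : ℕ) : ℝ))) *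
              (2 * Real.cos (2 * Real.pi * (v.val + 1) * jn / ((2 * N + 1 : ℕ) : ℝ)))) := by
      intro jn _
      rw [if_neg hu', if_neg hv']
      split_ifs <;> ring
    rw [Finset.sum_congr rfl e1, sum_shift]
    have e2 : ∀ j ∈ Finset.range N,
        (2 * Real.cos (2 * Real.pi * ((u.val:ℝ) + 1) * ((j+1 : ℕ):ℝ) / ((2 * N + 1 : ℕ) : ℝ))) *
        (2 * Real.cos (2 * Real.pi * ((v.val:ℝ) + 1) * ((j+1 : ℕ):ℝ) / ((2 * N + 1 : ℕ) : ℝ)))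
        = 2 * Real.cos (2 * Real.pi * (((u.val : ℤ) + v.val + 2 : ℤ):ℝ) * ((j:ℝ) + 1) / ((2 * N + 1 : ℕ) : ℝ))
          + 2 * Real.cos (2 * Real.pi * (((u.val : ℤ) - v.val : ℤ):ℝ) * ((j:ℝ) + 1) / ((2 * N + 1 : ℕ) : ℝ)) := by
      intro j _
      have hx : 2 * Real.pi * (((u.val : ℤ) + v.val + 2 : ℤ):ℝ) * ((j:ℝ) + 1) / ((2 * N + 1 : ℕ) : ℝ)
          = (2 * Real.pi * ((u.val:ℝ) + 1) * (((j:ℕ)+1 : ℕ):ℝ) / ((2 * N + 1 : ℕ) : ℝ))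
            + (2 * Real.pi * ((v.val:ℝ) + 1) * (((j:ℕ)+1 : ℕ):ℝ) / ((2 * N + 1 : ℕ) : ℝ)) := by
        push_cast; ring
      have hy : 2 * Real.pi * (((u.val : ℤ) - v.val : ℤ):ℝ) * ((j:ℝ) + 1) / ((2 * N + 1 : ℕ) : ℝ)
          = (2 * Real.pi * ((u.val:ℝ) + 1) * (((j:ℕ)+1 : ℕ):ℝ) / ((2 * N + 1 : ℕ) : ℝ))
            - (2 * Real.pi * ((v.val:ℝ) + 1) * (((j:ℕ)+1 : ℕ):ℝ) / ((2 * N + 1 : ℕ) : ℝ)) := by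
        push_cast; ring
      rw [hx, hy, Real.cos_add, Real.cos_sub]
      ring
    rw [Finset.sum_congr rfl e2, Finset.sum_add_distrib]
    have hT1 := T_eq N ((u.val : ℤ) + v.val + 2)
    have hT2 := T_eq N ((u.val : ℤ) - v.val)
    linarith
  refine ⟨?_, part2, ?_, part4⟩
  · intro u hu
    rw [hmain u u hu hu]
    rw [if_neg (hnd _ (by omega) (by omega)), if_pos ⟨0, by ring⟩]
    push_cast
    ring
  · intro u v hu hv huv
    have hne : (u.val : ℤ) ≠ v.val := by
      simp only [Ne, Int.natCast_inj]
      exact fun h => huv (Fin.ext h)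
    rw [hmain u v hu hv]
    rw [if_neg (hnd _ (by omega) (by omega)), if_neg (hnd _ (by omega) (by omega))]
    ring
end

section
/- Let p be an odd prime, s ≥ 1, N = (p^s − 1)/2, and let C be the cosine matrix of size N+1. Then C is invertible and its Frobenius condition number satisfies κ_F(C) = ‖C‖_F·‖C⁻¹‖_F < √2·(N+1). -/
open Matrix

open Finset Real Complex in
lemma key_sum (N k : ℕ) (hN : 1 ≤ N) (hk1 : 1 ≤ k) (hk2 : k ≤ 2*N) :
    ∑ i ∈ Finset.range N, 2 * Real.cos (2*Real.pi*(i+1)*k/(2*N+1)) = -1 := by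
  have hq0 : (0:ℝ) < 2*N+1 := by positivity
  set θ : ℝ := 2*Real.pi*k/(2*N+1) with hθ
  have hθpos : 0 < θ := by
    apply div_pos _ hq0
    have := Real.pi_pos
    have : (0:ℝ) < (k:ℝ) := by exact_mod_cast hk1
    positivity
  have hθlt : θ < 2*Real.pi := by
    rw [hθ, div_lt_iff₀ hq0]
    have hklt : (k:ℝ) < 2*N+1 := by exact_mod_cast Nat.lt_succ_of_le hk2
    have := Real.pi_pos
    nlinarith
  set z : ℂ := Complex.exp (θ * Complex.I) with hz
  have hz1 : z ≠ 1 := by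
    intro h
    have hre : Real.cos θ = 1 := by
      have := congrArg Complex.re h
      rwa [hz, Complex.exp_ofReal_mul_I_re] at this
    obtain ⟨n, hn⟩ := (Real.cos_eq_one_iff θ).mp hre
    have hpi := Real.pi_pos
    have h0 : (0:ℝ) < n * (2*Real.pi) := hn ▸ hθpos
    have h1 : (n:ℝ) * (2*Real.pi) < 1 * (2*Real.pi) := by rw [hn, one_mul]; exact hθlt
    have hn0 : 0 < (n:ℝ) := by nlinarith
    have hn1 : (n:ℝ) < 1 := by nlinarith
    have : (0:ℤ) < n := by exact_mod_cast hn0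
    have : (n:ℤ) < 1 := by exact_mod_cast hn1
    omega
  have hzq : z ^ (2*N+1) = 1 := by
    rw [hz, ← Complex.exp_nat_mul]
    have hreal : (2*(N:ℝ)+1) * θ = k * (2*Real.pi) := by
      rw [hθ]; field_simp
    have : ((2*N+1 : ℕ) : ℂ) * (↑θ * Complex.I) = (k : ℤ) * (2*Real.pi*Complex.I) := by
      push_cast
      have := congrArg (fun x : ℝ => (x:ℂ)) hreal
      push_cast at this
      linear_combination Complex.I * this
    rw [this, Complex.exp_int_mul_two_pi_mul_I]
  have hzsum : ∑ i ∈ Finset.range N, (z^(i+1) + z^(2*N - i)) = -1 := by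
    have h1 : ∑ i ∈ Finset.range N, z^(i+1) = z * ∑ i ∈ Finset.range N, z^i := by
      rw [Finset.mul_sum]
      exact Finset.sum_congr rfl fun i _ => by ring
    have h2 : ∑ i ∈ Finset.range N, z^(2*N - i) = z^(N+1) * ∑ i ∈ Finset.range N, z^i := by
      rw [← Finset.sum_range_reflect (fun i => z^(2*N - i)) N, Finset.mul_sum]
      refine Finset.sum_congr rfl fun i hi => ?_
      rw [Finset.mem_range] at hi
      rw [← pow_add]
      congr 1
      omega
    rw [Finset.sum_add_distrib, h1, h2, ← add_mul, geom_sum_eq hz1]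
    have hne : z - 1 ≠ 0 := sub_ne_zero.mpr hz1
    field_simp
    linear_combination hzq
  have hre : ∀ m : ℕ, (z^m).re = Real.cos (m * θ) := by
    intro m
    rw [hz, ← Complex.exp_nat_mul]
    have : (m:ℂ) * (↑θ * Complex.I) = ((m * θ : ℝ) : ℂ) * Complex.I := by push_cast; ring
    rw [this, Complex.exp_ofReal_mul_I_re]
  have hcos2 : ∀ i : ℕ, i < N → Real.cos ((2*N - i : ℕ) * θ) = Real.cos ((i+1) * θ) := by
    intro i hi
    have hcast : ((2*N - i : ℕ) : ℝ) = 2*N - i := by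
      have : i ≤ 2*N := by omega
      push_cast [Nat.cast_sub this]
      ring
    have harg : ((2*N - i : ℕ) : ℝ) * θ = (k:ℕ) * (2*Real.pi) - (i+1) * θ := by
      rw [hcast, hθ]
      have hne := ne_of_gt hq0
      field_simp
      ring
    have h2k : (k:ℝ) * (2*Real.pi) = ((2*k : ℕ):ℝ) * Real.pi := by push_cast; ring
    rw [harg, Real.cos_sub, h2k, Real.sin_nat_mul_pi]
    have : Real.cos (((2*k : ℕ):ℝ) * Real.pi) = 1 := by
      rw [show ((2*k : ℕ):ℝ) * Real.pi = (k:ℕ) * (2*Real.pi) by push_cast; ring,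
        Real.cos_nat_mul_two_pi]
    rw [this]; ring
  have := congrArg Complex.re hzsum
  rw [Complex.re_sum] at this
  simp only [Complex.add_re, hre] at this
  have heq : ∑ i ∈ Finset.range N, 2 * Real.cos (2*Real.pi*(i+1)*k/(2*N+1))
      = ∑ i ∈ Finset.range N, (Real.cos ((i+1:ℕ) * θ) + Real.cos ((2*N - i : ℕ) * θ)) := by
    refine Finset.sum_congr rfl fun i hi => ?_
    rw [Finset.mem_range] at hi
    rw [hcos2 i hi]
    have : ((i+1:ℕ):ℝ) * θ = 2*Real.pi*(i+1)*k/(2*N+1) := by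
      rw [hθ]; push_cast; ring
    rw [this]; push_cast at this; rw [this]; ring
  rw [heq]
  exact this

lemma pair_sum (N u v : ℕ) (hN : 1 ≤ N) (hu1 : 1 ≤ u) (hu : u ≤ N) (hv1 : 1 ≤ v) (hv : v ≤ N) :
    ∑ i ∈ Finset.range N,
      (2 * Real.cos (2*Real.pi*(i+1)*u/(2*N+1))) * (2 * Real.cos (2*Real.pi*(i+1)*v/(2*N+1)))
    = if u = v then 2*(N:ℝ) - 1 else -2 := by
  have hcs : ∀ x y : ℝ, (2*Real.cos x) * (2*Real.cos y)
      = 2*Real.cos (x+y) + 2*Real.cos (x-y) := by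
    intro x y; rw [Real.cos_add, Real.cos_sub]; ring
  have hsplit : ∑ i ∈ Finset.range N,
      (2 * Real.cos (2*Real.pi*(i+1)*u/(2*N+1))) * (2 * Real.cos (2*Real.pi*(i+1)*v/(2*N+1)))
      = (∑ i ∈ Finset.range N, 2 * Real.cos (2*Real.pi*(i+1)*(u+v:ℕ)/(2*N+1)))
        + ∑ i ∈ Finset.range N, 2 * Real.cos (2*Real.pi*(i+1)*u/(2*N+1) - 2*Real.pi*(i+1)*v/(2*N+1)) := by
    rw [← Finset.sum_add_distrib]
    refine Finset.sum_congr rfl fun i _ => ?_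
    rw [hcs]
    congr 2
    push_cast; ring
  rw [hsplit, key_sum N (u+v) hN (by omega) (by omega)]
  rcases lt_trichotomy u v with h | h | h
  · have heach : ∀ i ∈ Finset.range N,
        2 * Real.cos (2*Real.pi*(i+1)*u/(2*N+1) - 2*Real.pi*(i+1)*v/(2*N+1))
        = 2 * Real.cos (2*Real.pi*(i+1)*((v-u:ℕ):ℝ)/(2*N+1)) := by
      intro i _
      rw [← Real.cos_neg (2*Real.pi*(i+1)*u/(2*N+1) - 2*Real.pi*(i+1)*v/(2*N+1))]
      congr 2
      rw [Nat.cast_sub (le_of_lt h)]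
      ring
    rw [Finset.sum_congr rfl heach, key_sum N (v-u) hN (by omega) (by omega)]
    simp [Nat.ne_of_lt h]
    norm_num
  · subst h
    have heach : ∀ i ∈ Finset.range N,
        2 * Real.cos (2*Real.pi*(i+1)*u/(2*N+1) - 2*Real.pi*(i+1)*u/(2*N+1)) = 2 := by
      intro i _; rw [sub_self, Real.cos_zero]; norm_num
    rw [Finset.sum_congr rfl heach, Finset.sum_const, Finset.card_range]
    simp
    push_cast; ring
  · have heach : ∀ i ∈ Finset.range N,
        2 * Real.cos (2*Real.pi*(i+1)*u/(2*N+1) - 2*Real.pi*(i+1)*v/(2*N+1))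
        = 2 * Real.cos (2*Real.pi*(i+1)*((u-v:ℕ):ℝ)/(2*N+1)) := by
      intro i _
      congr 2
      rw [Nat.cast_sub (le_of_lt h)]
      ring
    rw [Finset.sum_congr rfl heach, key_sum N (u-v) hN (by omega) (by omega)]
    simp [Nat.ne_of_gt h]
    norm_num


open Matrix

noncomputable def Mmat (N : ℕ) : Matrix (Fin (N+1)) (Fin (N+1)) ℝ := fun a b =>
  if a = 0 ∧ b = 0 then (N+1 : ℝ) else if a = 0 ∨ b = 0 then 0
  else if a = b then 2*N else -1

noncomputable def Mi (N : ℕ) : Matrix (Fin (N+1)) (Fin (N+1)) ℝ := fun a b =>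
  if a = 0 ∧ b = 0 then 1/(N+1 : ℝ) else if a = 0 ∨ b = 0 then 0
  else if a = b then (N+2)/((2*N+1)*(N+1)) else 1/((2*N+1)*(N+1))

lemma Mi_symm (N : ℕ) : (Mi N)ᵀ = Mi N := by
  ext a b
  simp only [transpose_apply, Mi]
  by_cases hab : a = b
  · subst hab; rfl
  · have hba : ¬ b = a := fun h => hab h.symm
    simp [hab, hba, or_comm, and_comm]

lemma Mi_mul_M (N : ℕ) : Mi N * Mmat N = 1 := by
  have hq0 : ((2*N+1 : ℝ)) ≠ 0 := by positivity
  have hN0 : ((N+1 : ℝ)) ≠ 0 := by positivity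
  set α : ℝ := (N+2)/((2*N+1)*(N+1)) with hα
  set β : ℝ := 1/((2*N+1)*(N+1)) with hβ
  ext a b
  rw [Matrix.mul_apply, Fin.sum_univ_succ]
  induction b using Fin.cases with
  | zero =>
    induction a using Fin.cases with
    | zero =>
      have : ∀ c : Fin N, Mi N 0 c.succ * Mmat N c.succ 0 = 0 := by
        intro c
        simp [Mi, Mmat, Fin.succ_ne_zero]
      simp only [this, Finset.sum_const_zero, add_zero]
      simp [Mi, Mmat, Matrix.one_apply]
      field_simp
    | succ k =>
      have : ∀ c : Fin N, Mi N k.succ c.succ * Mmat N c.succ 0 = 0 := by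
        intro c
        simp [Mmat, Fin.succ_ne_zero]
      simp only [this, Finset.sum_const_zero, add_zero]
      simp [Mi, Mmat, Matrix.one_apply, Fin.succ_ne_zero]
  | succ l =>
    induction a using Fin.cases with
    | zero =>
      have : ∀ c : Fin N, Mi N 0 c.succ * Mmat N c.succ l.succ = 0 := by
        intro c
        simp [Mi, Fin.succ_ne_zero]
      simp only [this, Finset.sum_const_zero, add_zero]
      simp [Mi, Mmat, Matrix.one_apply, Fin.succ_ne_zero, (Fin.succ_ne_zero l).symm]
    | succ k =>
      have h0 : Mi N k.succ 0 * Mmat N 0 l.succ = 0 := by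
        simp [Mi, Fin.succ_ne_zero]
      rw [h0, zero_add]
      have hterm : ∀ c : Fin N, Mi N k.succ c.succ * Mmat N c.succ l.succ
          = -β + (if c = l then β*(2*N+1) else 0) + (if c = k then -(α-β) else 0)
            + (if c = k then (if k = l then (α-β)*(2*N+1) else 0) else 0) := by
        intro c
        have hn1 : ¬((k.succ : Fin (N+1)) = 0 ∧ (c.succ : Fin (N+1)) = 0) :=
          fun h => Fin.succ_ne_zero k h.1
        have hn2 : ¬((k.succ : Fin (N+1)) = 0 ∨ (c.succ : Fin (N+1)) = 0) := by
          rintro (h|h)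
          exacts [Fin.succ_ne_zero k h, Fin.succ_ne_zero c h]
        have hn3 : ¬((c.succ : Fin (N+1)) = 0 ∧ (l.succ : Fin (N+1)) = 0) :=
          fun h => Fin.succ_ne_zero c h.1
        have hn4 : ¬((c.succ : Fin (N+1)) = 0 ∨ (l.succ : Fin (N+1)) = 0) := by
          rintro (h|h)
          exacts [Fin.succ_ne_zero c h, Fin.succ_ne_zero l h]
        have e1 : Mi N k.succ c.succ = if c = k then α else β := by
          simp only [Mi]
          rw [if_neg hn1, if_neg hn2]
          by_cases h : c = k
          · rw [if_pos (by rw [h]), if_pos h, hα]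
          · rw [if_neg (fun hh => h (Fin.succ_inj.mp hh).symm), if_neg h, hβ]
        have e2 : Mmat N c.succ l.succ = if c = l then (2*(N:ℝ)) else -1 := by
          simp only [Mmat]
          rw [if_neg hn3, if_neg hn4]
          by_cases h : c = l
          · rw [if_pos (by rw [h]), if_pos h]
          · rw [if_neg (fun hh => h (Fin.succ_inj.mp hh)), if_neg h]
        rw [e1, e2]
        by_cases h1 : c = k
        · subst h1
          by_cases h2 : c = l
          · subst h2; simp; try ring
          · simp [h2]; try ring
        · by_cases h2 : c = l
          · subst h2; simp [h1]; try ring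
          · simp [h1, h2]; try ring
      rw [Finset.sum_congr rfl (fun c _ => hterm c)]
      rw [Finset.sum_add_distrib, Finset.sum_add_distrib, Finset.sum_add_distrib,
        Finset.sum_const, Finset.card_univ, Finset.sum_ite_eq' Finset.univ l,
        Finset.sum_ite_eq' Finset.univ k, Finset.sum_ite_eq' Finset.univ k]
      simp only [Finset.mem_univ, if_true, Finset.card_univ, Fintype.card_fin, nsmul_eq_mul]
      rw [Matrix.one_apply]
      by_cases hkl : k = l
      · rw [if_pos hkl, if_pos (by rw [hkl])]
        rw [hα, hβ]
        field_simp
        ring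
      · rw [if_neg hkl, if_neg (fun h => hkl (Fin.succ_inj.mp h))]
        rw [hα, hβ]
        field_simp
        ring

lemma trace_M (N : ℕ) : Matrix.trace (Mmat N) = (N+1) + N*(2*N) := by
  rw [Matrix.trace]
  rw [show (∑ i, (Mmat N).diag i) = ∑ i : Fin (N+1), Mmat N i i from rfl]
  rw [Fin.sum_univ_succ]
  have : ∀ c : Fin N, Mmat N c.succ c.succ = 2*N := by
    intro c; simp [Mmat, Fin.succ_ne_zero]
  simp only [this, Finset.sum_const, Finset.card_univ, Fintype.card_fin, nsmul_eq_mul]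
  simp [Mmat]

lemma trace_Mi (N : ℕ) : Matrix.trace (Mi N) = 1/(N+1) + N*((N+2)/((2*N+1)*(N+1))) := by
  rw [Matrix.trace]
  rw [show (∑ i, (Mi N).diag i) = ∑ i : Fin (N+1), Mi N i i from rfl]
  rw [Fin.sum_univ_succ]
  have : ∀ c : Fin N, Mi N c.succ c.succ = (N+2)/((2*N+1)*(N+1)) := by
    intro c; simp [Mi, Fin.succ_ne_zero]
  simp only [this, Finset.sum_const, Finset.card_univ, Fintype.card_fin, nsmul_eq_mul]
  simp [Mi]


/-- The Frobenius norm of a real square matrix. -/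
noncomputable def frobNorm {n : ℕ} (A : Matrix (Fin n) (Fin n) ℝ) : ℝ :=
  Real.sqrt (∑ i, ∑ j, (A i j) ^ 2)

/-- For an odd prime `p`, `s ≥ 1`, `N = (p^s − 1)/2`, the cosine matrix
`C` of size `N+1` is invertible and its Frobenius condition number satisfies
`κ_F(C) = ‖C‖_F·‖C⁻¹‖_F < √2·(N+1)`. -/
theorem cosine_matrix_cond_lt (p s N : ℕ) (hp : p.Prime) (hodd : Odd p) (hs : 1 ≤ s)
    (hN : N = (p ^ s - 1) / 2)
    (C : Matrix (Fin (N + 1)) (Fin (N + 1)) ℝ)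
    (hC : ∀ i j : Fin (N + 1), C i j =
      if i.val = N then 1
      else if j.val = 0 then 1
      else 2 * Real.cos (2 * Real.pi * (i.val + 1) * j.val / (p : ℝ) ^ s)) :
    IsUnit C.det ∧ frobNorm C * frobNorm C⁻¹ < Real.sqrt 2 * (N + 1) := by
  have hq : p ^ s = 2 * N + 1 := by
    obtain ⟨t, ht⟩ := hodd.pow (n := s)
    have hp1 : 1 ≤ p ^ s := Nat.one_le_pow _ _ hp.pos
    omega
  have hN1 : 1 ≤ N := by
    have hp3 : 3 ≤ p := by
      have h2 := hp.two_le
      obtain ⟨m, hm⟩ := hodd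
      omega
    have hle : p ≤ p ^ s := Nat.le_self_pow (by omega) p
    omega
  have hps : ((p:ℝ))^s = 2*(N:ℝ)+1 := by
    exact_mod_cast congrArg (fun n : ℕ => (n:ℝ)) hq
  have hCtC : Cᵀ * C = Mmat N := by
    ext a b
    rw [Matrix.mul_apply]
    simp only [Matrix.transpose_apply]
    rw [Fin.sum_univ_castSucc]
    have hlast : C (Fin.last N) a * C (Fin.last N) b = 1 := by
      rw [hC, hC]; simp [Fin.val_last]
    rw [hlast]
    have hcast : ∀ (i : Fin N) (j : Fin (N+1)), C i.castSucc j
        = if j = 0 then 1 else 2 * Real.cos (2*Real.pi*((i:ℕ)+1)*((j:ℕ):ℝ)/(2*(N:ℝ)+1)) := by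
      intro i j
      rw [hC]
      have h1 : ¬((i.castSucc : Fin (N+1)).val = N) := by
        simp only [Fin.coe_castSucc]
        exact Nat.ne_of_lt i.isLt
      rw [if_neg h1]
      by_cases hj : j = 0
      · rw [if_pos (by simp [hj]), if_pos hj]
      · rw [if_neg (show ¬(j:ℕ) = 0 from fun h => hj (Fin.ext (by simp [h]))), if_neg hj, hps]
        simp only [Fin.coe_castSucc]
    by_cases ha : a = 0 <;> by_cases hb : b = 0
    · subst ha; subst hb
      simp only [hcast, if_pos rfl, mul_one]
      simp [Mmat]
    · have hbv1 : 1 ≤ (b:ℕ) := Fin.pos_iff_ne_zero.mpr hb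
      have hbv2 : (b:ℕ) ≤ N := Nat.lt_succ_iff.mp b.isLt
      have hsum : ∑ i : Fin N, C i.castSucc a * C i.castSucc b
          = ∑ i ∈ Finset.range N, 2 * Real.cos (2*Real.pi*((i:ℕ)+1)*((b:ℕ):ℝ)/(2*(N:ℝ)+1)) := by
        rw [← Fin.sum_univ_eq_sum_range
          (fun i => 2 * Real.cos (2*Real.pi*((i:ℕ)+1)*((b:ℕ):ℝ)/(2*(N:ℝ)+1))) N]
        refine Finset.sum_congr rfl fun i _ => ?_
        rw [hcast, hcast, if_pos ha, if_neg hb, one_mul]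
      rw [hsum, key_sum N (b:ℕ) hN1 hbv1 (by omega)]
      simp [Mmat, ha, hb]
    · have hav1 : 1 ≤ (a:ℕ) := Fin.pos_iff_ne_zero.mpr ha
      have hav2 : (a:ℕ) ≤ N := Nat.lt_succ_iff.mp a.isLt
      have hsum : ∑ i : Fin N, C i.castSucc a * C i.castSucc b
          = ∑ i ∈ Finset.range N, 2 * Real.cos (2*Real.pi*((i:ℕ)+1)*((a:ℕ):ℝ)/(2*(N:ℝ)+1)) := by
        rw [← Fin.sum_univ_eq_sum_range
          (fun i => 2 * Real.cos (2*Real.pi*((i:ℕ)+1)*((a:ℕ):ℝ)/(2*(N:ℝ)+1))) N]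
        refine Finset.sum_congr rfl fun i _ => ?_
        rw [hcast, hcast, if_pos hb, if_neg ha, mul_one]
      rw [hsum, key_sum N (a:ℕ) hN1 hav1 (by omega)]
      simp [Mmat, ha, hb]
    · have hav1 : 1 ≤ (a:ℕ) := Fin.pos_iff_ne_zero.mpr ha
      have hav2 : (a:ℕ) ≤ N := Nat.lt_succ_iff.mp a.isLt
      have hbv1 : 1 ≤ (b:ℕ) := Fin.pos_iff_ne_zero.mpr hb
      have hbv2 : (b:ℕ) ≤ N := Nat.lt_succ_iff.mp b.isLt
      have hsum : ∑ i : Fin N, C i.castSucc a * C i.castSucc b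
          = ∑ i ∈ Finset.range N,
            (2 * Real.cos (2*Real.pi*((i:ℕ)+1)*((a:ℕ):ℝ)/(2*(N:ℝ)+1)))
            * (2 * Real.cos (2*Real.pi*((i:ℕ)+1)*((b:ℕ):ℝ)/(2*(N:ℝ)+1))) := by
        rw [← Fin.sum_univ_eq_sum_range
          (fun i => (2 * Real.cos (2*Real.pi*((i:ℕ)+1)*((a:ℕ):ℝ)/(2*(N:ℝ)+1)))
            * (2 * Real.cos (2*Real.pi*((i:ℕ)+1)*((b:ℕ):ℝ)/(2*(N:ℝ)+1)))) N]
        refine Finset.sum_congr rfl fun i _ => ?_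
        rw [hcast, hcast, if_neg ha, if_neg hb]
      rw [hsum, pair_sum N (a:ℕ) (b:ℕ) hN1 hav1 hav2 hbv1 hbv2]
      by_cases hab : a = b
      · rw [if_pos (by rw [hab]), Mmat]
        simp [ha, hb, hab]
        try ring
      · rw [if_neg (fun h => hab (Fin.val_injective h)), Mmat]
        simp [ha, hb, hab]
        norm_num
  have hlinv : (Mi N * Cᵀ) * C = 1 := by
    rw [Matrix.mul_assoc, hCtC, Mi_mul_M]
  refine ⟨Matrix.isUnit_det_of_left_inverse hlinv, ?_⟩
  have hinv : C⁻¹ = Mi N * Cᵀ := Matrix.inv_eq_left_inv hlinv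
  have hfC : ∑ i, ∑ j, (C i j)^2 = Matrix.trace (Cᵀ * C) := by
    have h1 : Matrix.trace (Cᵀ * C) = ∑ j, ∑ i, C i j * C i j := by
      simp [Matrix.trace, Matrix.diag, Matrix.mul_apply]
    rw [h1, Finset.sum_comm]
    simp [pow_two]
  have hDDt : (Mi N * Cᵀ) * (Mi N * Cᵀ)ᵀ = Mi N := by
    rw [Matrix.transpose_mul, Matrix.transpose_transpose, Matrix.mul_assoc,
      ← Matrix.mul_assoc Cᵀ C ((Mi N)ᵀ), hCtC,
      ← Matrix.mul_assoc (Mi N) (Mmat N) ((Mi N)ᵀ)]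
    rw [show Mi N * Mmat N = 1 from Mi_mul_M N, one_mul, Mi_symm]
  have hfD : ∑ i, ∑ j, ((Mi N * Cᵀ) i j)^2 = Matrix.trace ((Mi N * Cᵀ) * (Mi N * Cᵀ)ᵀ) := by
    simp [Matrix.trace, Matrix.diag, Matrix.mul_apply, Matrix.transpose_apply, pow_two,
      mul_comm]
  have hA : frobNorm C = Real.sqrt (((N:ℝ)+1) + N*(2*N)) := by
    rw [frobNorm, hfC, hCtC, trace_M]
  have hB : frobNorm C⁻¹
      = Real.sqrt (1/((N:ℝ)+1) + N*((N+2)/((2*N+1)*(N+1)))) := by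
    rw [hinv, frobNorm, hfD, hDDt, trace_Mi]
  have hx' : (1:ℝ) ≤ (N:ℝ) := by exact_mod_cast hN1
  set x : ℝ := (N:ℝ) with hxdef
  have hx : 1 ≤ x := hx'
  have hA0 : (0:ℝ) ≤ (x+1) + x*(2*x) := by positivity
  have hB0 : (0:ℝ) ≤ 1/(x+1) + x*((x+2)/((2*x+1)*(x+1))) := by positivity
  rw [hA, hB, ← Real.sqrt_mul hA0]
  have hrhs : Real.sqrt 2 * ((N:ℝ)+1) = Real.sqrt (2*(x+1)^2) := by
    rw [Real.sqrt_mul (by norm_num), Real.sqrt_sq (by positivity)]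
  rw [hrhs]
  apply Real.sqrt_lt_sqrt (by positivity)
  have h1 : (0:ℝ) < x + 1 := by linarith
  have h2 : (0:ℝ) < 2*x + 1 := by linarith
  have hBval : 1/(x+1) + x*((x+2)/((2*x+1)*(x+1)))
      = (x^2+4*x+1)/((2*x+1)*(x+1)) := by
    field_simp
    ring
  rw [hBval, ← mul_div_assoc, div_lt_iff₀ (by positivity)]
  nlinarith [sq_nonneg x, sq_nonneg (x*x), sq_nonneg (x-1)]
end

section
/- Let p be an odd prime, r ≥ 2, s ≥ 1, n = 2^r·p^s, N = 2^{r−2}·p^s − 1, and let C be the cosine matrix of size N+1. Then C is invertible and its Frobenius condition number satisfies κ_F(C) = ‖C‖_F·‖C⁻¹‖_F < √2·(N+1). -/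
open Matrix Finset


lemma sin_ne_zero_aux (M : ℕ) (m : ℝ) (h0 : m ≠ 0) (hM : 0 < M) (h : |m| < 2 * M) :
    Real.sin (Real.pi * m / (2 * M)) ≠ 0 := by
  have hMpos : (0:ℝ) < 2 * M := by positivity
  set x := Real.pi * m / (2 * M) with hx
  have habs : |x| = Real.pi * |m| / (2 * M) := by
    rw [hx, abs_div, abs_mul, abs_of_pos Real.pi_pos, abs_of_pos hMpos]
  have hlt : |x| < Real.pi := by
    rw [habs, div_lt_iff₀ hMpos]
    nlinarith [Real.pi_pos, h]
  have h1 := abs_lt.mp hlt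
  intro heq
  rw [Real.sin_eq_zero_iff_of_lt_of_lt (by linarith) (by linarith)] at heq
  rw [hx, div_eq_zero_iff] at heq
  rcases heq with heq | heq
  · rcases mul_eq_zero.mp heq with h' | h'
    · exact Real.pi_ne_zero h'
    · exact h0 h'
  · linarith

/-- telescoping cosine sum -/
lemma cos_sum_zero (M : ℕ) (α : ℝ) (h : Real.sin α ≠ 0) (h2 : Real.sin (2 * M * α) = 0) :
    ∑ i ∈ range M, Real.cos ((2 * i + 1) * α) = 0 := by
  have tel := Finset.sum_range_sub (fun i : ℕ => Real.sin (2 * i * α)) M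
  have key : (2 * Real.sin α) * ∑ i ∈ range M, Real.cos ((2 * i + 1) * α) = 0 := by
    rw [mul_sum]
    have : ∀ i ∈ range M, 2 * Real.sin α * Real.cos ((2 * (i:ℝ) + 1) * α)
        = Real.sin (2 * ((i:ℕ)+1 : ℕ) * α) - Real.sin (2 * (i:ℕ) * α) := by
      intro i _
      have e1 : (2 * (((i:ℕ)+1 : ℕ):ℝ) * α) = (2 * i + 1) * α + α := by push_cast; ring
      have e2 : (2 * ((i:ℕ):ℝ) * α) = (2 * i + 1) * α - α := by ring
      rw [e1, e2, Real.sin_add, Real.sin_sub]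
      ring
    rw [sum_congr rfl this, tel]
    simp only [Nat.cast_zero]
    rw [show (2 * (0:ℝ) * α) = 0 by ring, Real.sin_zero, sub_zero, h2]
  have h2s : (2 * Real.sin α) ≠ 0 := by simpa using h
  exact (mul_eq_zero.mp key).resolve_left h2s

lemma cos_sum_zero' (M : ℕ) (hM : 0 < M) (m : ℝ) (h0 : m ≠ 0) (h : |m| < 2 * M)
    (h2 : Real.sin (Real.pi * m) = 0) :
    ∑ i ∈ range M, Real.cos ((2 * i + 1) * (Real.pi * m / (2 * M))) = 0 := by
  apply cos_sum_zero M _ (sin_ne_zero_aux M m h0 hM h)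
  have hMne : (2 * (M:ℝ)) ≠ 0 := by positivity
  rw [show (2 * (M:ℝ) * (Real.pi * m / (2 * M))) = Real.pi * m by field_simp]
  exact h2

lemma sin_pi_int (m : ℤ) : Real.sin (Real.pi * m) = 0 := by
  rw [mul_comm]; exact Real.sin_int_mul_pi m

lemma ortho_aux (N : ℕ) (C : Matrix (Fin (N+1)) (Fin (N+1)) ℝ)
    (hC : ∀ i j : Fin (N+1), C i j = if j.val = 0 then 1
      else 2 * Real.cos ((2 * i.val + 1) * (Real.pi * j.val / (2 * ((N+1 : ℕ) : ℝ)))))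
    (j k : Fin (N+1)) :
    ∑ i, C i j * C i k
      = if j = k then ((N+1 : ℕ) : ℝ) * (if j.val = 0 then 1 else 2) else 0 := by
  have hMpos : 0 < N + 1 := Nat.succ_pos N
  have hbound : ∀ m : ℝ, |m| ≤ 2 * (N:ℝ) → |m| < 2 * ((N+1 : ℕ) : ℝ) := by
    intro m hm; push_cast; linarith
  have hsum : ∑ i : Fin (N+1), C i j * C i k = ∑ i ∈ range (N+1),
      ((if j.val = 0 then (1:ℝ) else
        2 * Real.cos ((2 * (i:ℝ) + 1) * (Real.pi * j.val / (2 * ((N+1 : ℕ) : ℝ))))) *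
       (if k.val = 0 then (1:ℝ) else
        2 * Real.cos ((2 * (i:ℝ) + 1) * (Real.pi * k.val / (2 * ((N+1 : ℕ) : ℝ)))))) := by
    rw [← Fin.sum_univ_eq_sum_range]
    exact Finset.sum_congr rfl fun i _ => by rw [hC i j, hC i k]
  have hjb : (j.val : ℝ) ≤ N := by exact_mod_cast Nat.lt_succ_iff.mp j.isLt
  have hkb : (k.val : ℝ) ≤ N := by exact_mod_cast Nat.lt_succ_iff.mp k.isLt
  have hNn : (0:ℝ) ≤ N := Nat.cast_nonneg N
  by_cases hj : j.val = 0 <;> by_cases hk : k.val = 0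
  · have hjk : j = k := Fin.ext (hj.trans hk.symm)
    rw [hsum]
    simp [hj, hk, hjk]
  · have hjk : j ≠ k := fun h => hk (h ▸ hj)
    rw [hsum]
    simp only [hj, hk, if_true, if_false, ite_true, ite_false, one_mul]
    rw [if_neg hjk, ← Finset.mul_sum]
    rw [cos_sum_zero' (N+1) hMpos (k.val : ℝ)
      (by exact_mod_cast hk)
      (hbound _ (by rw [abs_of_nonneg (Nat.cast_nonneg _)]; linarith))
      (by have := sin_pi_int (k.val : ℤ); push_cast at this ⊢; exact this)]
    ring
  · have hjk : j ≠ k := fun h => hj (h ▸ hk)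
    rw [hsum]
    simp only [hj, hk, if_true, if_false, ite_true, ite_false, mul_one]
    rw [if_neg hjk, ← Finset.mul_sum]
    rw [cos_sum_zero' (N+1) hMpos (j.val : ℝ)
      (by exact_mod_cast hj)
      (hbound _ (by rw [abs_of_nonneg (Nat.cast_nonneg _)]; linarith))
      (by have := sin_pi_int (j.val : ℤ); push_cast at this ⊢; exact this)]
    ring
  · -- both columns nonzero
    have hstep : ∀ i ∈ range (N+1),
        (2 * Real.cos ((2 * (i:ℝ) + 1) * (Real.pi * j.val / (2 * ((N+1 : ℕ) : ℝ))))) *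
        (2 * Real.cos ((2 * (i:ℝ) + 1) * (Real.pi * k.val / (2 * ((N+1 : ℕ) : ℝ)))))
        = 2 * Real.cos ((2 * (i:ℝ) + 1) *
            (Real.pi * ((j.val : ℝ) + (k.val : ℝ)) / (2 * ((N+1 : ℕ) : ℝ))))
          + 2 * Real.cos ((2 * (i:ℝ) + 1) *
            (Real.pi * ((j.val : ℝ) - (k.val : ℝ)) / (2 * ((N+1 : ℕ) : ℝ)))) := by
      intro i _
      set a := (2 * (i:ℝ) + 1) * (Real.pi * j.val / (2 * ((N+1 : ℕ) : ℝ))) with ha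
      set b := (2 * (i:ℝ) + 1) * (Real.pi * k.val / (2 * ((N+1 : ℕ) : ℝ))) with hb
      have e1 : (2 * (i:ℝ) + 1) * (Real.pi * ((j.val : ℝ) + (k.val : ℝ)) /
          (2 * ((N+1 : ℕ) : ℝ))) = a + b := by rw [ha, hb]; ring
      have e2 : (2 * (i:ℝ) + 1) * (Real.pi * ((j.val : ℝ) - (k.val : ℝ)) /
          (2 * ((N+1 : ℕ) : ℝ))) = a - b := by rw [ha, hb]; ring
      rw [e1, e2, Real.cos_add, Real.cos_sub]
      ring
    rw [hsum]
    simp only [hj, hk, ite_false]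
    rw [sum_congr rfl hstep, Finset.sum_add_distrib, ← Finset.mul_sum, ← Finset.mul_sum]
    have hplus : ∑ i ∈ range (N+1), Real.cos ((2 * (i:ℝ) + 1) *
        (Real.pi * ((j.val : ℝ) + (k.val : ℝ)) / (2 * ((N+1 : ℕ) : ℝ)))) = 0 := by
      apply cos_sum_zero' (N+1) hMpos
      · have : (0:ℝ) < (j.val : ℝ) := by
          have : 0 < j.val := Nat.pos_of_ne_zero hj
          exact_mod_cast this
        positivity
      · apply hbound
        rw [abs_of_nonneg (by positivity)]; linarith
      · have := sin_pi_int ((j.val : ℤ) + (k.val : ℤ)); push_cast at this ⊢; exact this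
    by_cases hjk : j = k
    · have hv : (j.val : ℝ) - (k.val : ℝ) = 0 := by rw [hjk]; ring
      rw [hplus, hv, if_pos hjk]
      simp only [mul_zero, zero_div, zero_mul, Real.cos_zero, Finset.sum_const,
        Finset.card_range, nsmul_eq_mul, mul_one, mul_zero]
      push_cast
      ring
    · have hvne : (j.val : ℝ) - (k.val : ℝ) ≠ 0 := by
        intro h
        exact hjk (Fin.ext (by exact_mod_cast sub_eq_zero.mp h))
      have hminus : ∑ i ∈ range (N+1), Real.cos ((2 * (i:ℝ) + 1) *
          (Real.pi * ((j.val : ℝ) - (k.val : ℝ)) / (2 * ((N+1 : ℕ) : ℝ)))) = 0 := by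
        apply cos_sum_zero' (N+1) hMpos _ hvne
        · apply hbound
          rw [abs_sub_le_iff]
          constructor <;> linarith [Nat.cast_nonneg (α := ℝ) j.val,
            Nat.cast_nonneg (α := ℝ) k.val]
        · have := sin_pi_int ((j.val : ℤ) - (k.val : ℤ)); push_cast at this ⊢; exact this
      rw [hplus, hminus, if_neg hjk]
      ring

/-- For an odd prime `p`, `r ≥ 2`, `s ≥ 1`, `n = 2^r·p^s`,
`N = 2^{r−2}·p^s − 1`, the cosine matrix `C` of size `N+1` is invertible and its
Frobenius condition number satisfies `κ_F(C) = ‖C‖_F·‖C⁻¹‖_F < √2·(N+1)`. -/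
theorem cosine_matrix_cond_lt_two_pow (p r s N : ℕ) (hp : p.Prime) (hodd : Odd p)
    (hr : 2 ≤ r) (hs : 1 ≤ s) (hN : N + 1 = 2 ^ (r - 2) * p ^ s)
    (C : Matrix (Fin (N + 1)) (Fin (N + 1)) ℝ)
    (hC : ∀ i j : Fin (N + 1), C i j =
      if j.val = 0 then 1
      else 2 * Real.cos (2 * Real.pi * (2 * i.val + 1) * j.val
        / ((2 : ℝ) ^ r * (p : ℝ) ^ s))) :
    IsUnit C.det ∧ frobNorm C * frobNorm C⁻¹ < Real.sqrt 2 * (N + 1) := by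
  have hM0 : ((N+1 : ℕ) : ℝ) ≠ 0 := by positivity
  have hMpos : (0:ℝ) < ((N+1 : ℕ) : ℝ) := by positivity
  -- rewrite the entries in normalized form
  obtain ⟨t, rfl⟩ : ∃ t, r = t + 2 := ⟨r - 2, by omega⟩
  rw [Nat.add_sub_cancel] at hN
  have hn : (2 : ℝ) ^ (t+2) * (p : ℝ) ^ s = 4 * ((N+1 : ℕ) : ℝ) := by
    have h1 : ((N+1 : ℕ) : ℝ) = 2 ^ t * (p:ℝ) ^ s := by exact_mod_cast hN
    rw [pow_add, h1]; ring
  have hC' : ∀ i j : Fin (N+1), C i j = if j.val = 0 then 1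
      else 2 * Real.cos ((2 * i.val + 1) * (Real.pi * j.val / (2 * ((N+1 : ℕ) : ℝ)))) := by
    intro i j
    rw [hC i j]
    by_cases hj : j.val = 0
    · simp [hj]
    · rw [if_neg hj, if_neg hj, hn]
      congr 1
      congr 1
      field_simp
      ring
  have ortho := ortho_aux N C hC'
  -- the explicit inverse
  set d : Fin (N+1) → ℝ := fun j => if j.val = 0 then 1 else 2 with hd
  have hdpos : ∀ j, 0 < d j := by
    intro j; rw [hd]; dsimp only; split_ifs <;> norm_num
  have hdne : ∀ j, ((N+1 : ℕ) : ℝ) * d j ≠ 0 := fun j => by positivity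
  set B : Matrix (Fin (N+1)) (Fin (N+1)) ℝ :=
    Matrix.of (fun j i => C i j / (((N+1 : ℕ) : ℝ) * d j)) with hB
  have hBC : B * C = 1 := by
    ext j k
    rw [Matrix.mul_apply, Matrix.one_apply]
    have : ∀ i, B j i * C i k = C i j * C i k / (((N+1 : ℕ) : ℝ) * d j) := by
      intro i; rw [hB]; dsimp only [Matrix.of_apply]; ring
    rw [Finset.sum_congr rfl (fun i _ => this i), ← Finset.sum_div, ortho j k]
    rw [show (if (j:ℕ) = 0 then (1:ℝ) else 2) = d j from rfl]
    split_ifs with h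
    · exact div_self (hdne j)
    · exact zero_div _
  have hdet : IsUnit C.det := Matrix.isUnit_det_of_left_inverse hBC
  have hCinv : C⁻¹ = B := Matrix.inv_eq_left_inv hBC
  refine ⟨hdet, ?_⟩
  -- column norms
  have hcol : ∀ j, ∑ i, (C i j) ^ 2 = ((N+1 : ℕ) : ℝ) * d j := by
    intro j
    have := ortho j j
    rw [if_pos rfl] at this
    rw [← this]
    exact Finset.sum_congr rfl fun i _ => sq (C i j)
  -- Frobenius norm of C
  have hFC : ∑ i, ∑ j, (C i j) ^ 2 = ((N+1 : ℕ) : ℝ) * (2 * N + 1) := by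
    rw [Finset.sum_comm]
    rw [Finset.sum_congr rfl (fun j _ => hcol j)]
    rw [Fin.sum_univ_succ]
    have h0 : d (0 : Fin (N+1)) = 1 := by rw [hd]; simp
    have hs' : ∀ i : Fin N, d (Fin.succ i) = 2 := by
      intro i; rw [hd]; simp [Fin.val_succ]
    rw [h0]
    rw [Finset.sum_congr rfl (fun i _ => by rw [hs' i])]
    rw [Finset.sum_const, Finset.card_univ, Fintype.card_fin]
    push_cast
    ring
  -- Frobenius norm of the inverse
  have hFB : ∑ i, ∑ j, (B i j) ^ 2 = (((N:ℝ) + 2)) / (2 * ((N+1 : ℕ) : ℝ)) := by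
    have hrow : ∀ j, ∑ i, (B j i) ^ 2 = 1 / (((N+1 : ℕ) : ℝ) * d j) := by
      intro j
      have : ∀ i, (B j i) ^ 2 = (C i j) ^ 2 / (((N+1 : ℕ) : ℝ) * d j) ^ 2 := by
        intro i; rw [hB]; dsimp only [Matrix.of_apply]; rw [div_pow]
      rw [Finset.sum_congr rfl (fun i _ => this i), ← Finset.sum_div, hcol j]
      rw [sq]
      field_simp
    rw [Finset.sum_congr rfl (fun j _ => hrow j)]
    rw [Fin.sum_univ_succ]
    have h0 : d (0 : Fin (N+1)) = 1 := by rw [hd]; simp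
    have hs' : ∀ i : Fin N, d (Fin.succ i) = 2 := by
      intro i; rw [hd]; simp [Fin.val_succ]
    rw [h0]
    rw [Finset.sum_congr rfl (fun i _ => by rw [hs' i])]
    rw [Finset.sum_const, Finset.card_univ, Fintype.card_fin]
    push_cast
    rw [nsmul_eq_mul]
    field_simp
    ring
  -- final computation
  rw [hCinv]
  unfold frobNorm
  rw [hFC, hFB]
  set x : ℝ := (N : ℝ) with hx
  have hxM : ((N+1 : ℕ) : ℝ) = x + 1 := by push_cast; ring
  have hx0 : 0 ≤ x := Nat.cast_nonneg N
  rw [hxM]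
  rw [← Real.sqrt_mul (by positivity)]
  have harg : (x + 1) * (2 * x + 1) * ((x + 2) / (2 * (x + 1))) = (2*x+1)*(x+2)/2 := by
    field_simp
  rw [harg]
  have hrhs : Real.sqrt 2 * ((N:ℝ) + 1) = Real.sqrt (2 * (x+1)^2) := by
    rw [Real.sqrt_mul (by norm_num), Real.sqrt_sq (by positivity)]
  rw [hrhs]
  apply Real.sqrt_lt_sqrt (by positivity)
  nlinarith
end
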